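/- For the Chinese monoid CH({x_1 < x_2}) on a two-element ordered set, the staircase words x_1^a (x_2 x_1)^b x_2^c, for non-negative integers a, b, c, represent pairwise distinct elements and every element is represented by exactly one such word. -/

import Mathlib

open FreeMonoid

/-- The Chinese relations `cba = bca` and `cba = cab` for `a ≤ b ≤ c`. -/
def chineseRel (X : Type*) [LinearOrder X] : FreeMonoid X → FreeMonoid X → Prop :=
  fun u v => ∃ a b c : X, a ≤ b ∧ b ≤ c ∧
    u = of c * of b * of a ∧
    (v = of b * of c * of a ∨ v = of c * of a * of b)

/-- The Chinese monoid on two generators `x_1 < x_2`. -/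
abbrev CH2 := (conGen (chineseRel (Fin 2))).Quotient

namespace CH2NF

abbrev C : Con (FreeMonoid (Fin 2)) := conGen (chineseRel (Fin 2))

def X : CH2 := C.mk' (of 0)
def Y : CH2 := C.mk' (of 1)

lemma rel1 : Y * X * X = X * (Y * X) := by
  show C.mk' (of 1) * C.mk' (of 0) * C.mk' (of 0) = _
  rw [← map_mul, ← map_mul]
  show _ = C.mk' (of 0) * (C.mk' (of 1) * C.mk' (of 0))
  rw [← map_mul, ← map_mul]
  exact (Con.eq _).mpr (ConGen.Rel.of _ _
    ⟨0, 0, 1, le_refl _, by decide, rfl, Or.inl (by rw [mul_assoc])⟩)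

lemma rel2 : Y * (Y * X) = Y * X * Y := by
  show C.mk' (of 1) * (C.mk' (of 1) * C.mk' (of 0)) = _
  rw [← map_mul, ← map_mul]
  show _ = C.mk' (of 1) * C.mk' (of 0) * C.mk' (of 1)
  rw [← map_mul, ← map_mul]
  exact (Con.eq _).mpr (ConGen.Rel.of _ _
    ⟨0, 1, 1, by decide, le_refl _, (mul_assoc _ _ _).symm, Or.inr rfl⟩)

lemma commXT : Commute X (Y * X) := by
  unfold Commute SemiconjBy
  rw [← rel1, mul_assoc]

lemma commYT : Commute Y (Y * X) := by
  unfold Commute SemiconjBy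
  rw [rel2, mul_assoc]

/-- evaluation of the staircase word. -/
def e (a b c : ℕ) : CH2 := X ^ a * (Y * X) ^ b * Y ^ c

lemma hX (a b c : ℕ) : X * e a b c = e (a + 1) b c := by
  unfold e
  rw [← mul_assoc, ← mul_assoc, ← pow_succ']

lemma hT (a b c : ℕ) : (Y * X) * e a b c = e a (b + 1) c := by
  unfold e
  rw [← mul_assoc, ← mul_assoc, (commXT.symm.pow_right a).eq, mul_assoc (X ^ a),
    ← pow_succ']

lemma hY0 (b c : ℕ) : Y * e 0 b c = e 0 b (c + 1) := by
  unfold e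
  simp only [pow_zero, one_mul, ← mul_assoc]
  rw [(commYT.pow_right b).eq, mul_assoc, ← pow_succ']

lemma hYS (a b c : ℕ) : Y * e (a + 1) b c = e a (b + 1) c := by
  rw [← hX, ← mul_assoc, hT]

/-- surjectivity -/
lemma surj (z : CH2) : ∃ a b c : ℕ, e a b c = z := by
  induction z using Con.induction_on with
  | H w =>
    induction w using FreeMonoid.recOn with
    | one => exact ⟨0, 0, 0, by simp [e]⟩
    | of_mul g w ih =>
      obtain ⟨a, b, c, h⟩ := ih
      rw [Con.coe_mul, ← h]
      fin_cases g
      · exact ⟨a + 1, b, c, (hX a b c).symm⟩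
      · match a with
        | 0 => exact ⟨0, b, c + 1, (hY0 b c).symm⟩
        | a + 1 => exact ⟨a, b + 1, c, (hYS a b c).symm⟩

/-- model monoid -/
structure M where
  a : ℕ
  b : ℕ
  c : ℕ
deriving DecidableEq

instance : Mul M :=
  ⟨fun p q => ⟨p.a + (q.a - p.c), p.b + q.b + (p.c - (p.c - q.a)), (p.c - q.a) + q.c⟩⟩

instance : One M := ⟨⟨0, 0, 0⟩⟩

lemma M.mul_def (p q : M) :
    p * q = ⟨p.a + (q.a - p.c), p.b + q.b + (p.c - (p.c - q.a)), (p.c - q.a) + q.c⟩ := rfl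

lemma M.one_def : (1 : M) = ⟨0, 0, 0⟩ := rfl

instance : Monoid M where
  mul_assoc p q r := by
    simp only [M.mul_def, M.mk.injEq]
    refine ⟨by omega, by omega, by omega⟩
  one_mul p := by cases p; simp [M.mul_def, M.one_def, M.mk.injEq] <;> omega
  mul_one p := by cases p; simp [M.mul_def, M.one_def, M.mk.injEq] <;> omega

def f : Fin 2 → M := fun i => if i = 0 then ⟨1, 0, 0⟩ else ⟨0, 0, 1⟩

def φ : FreeMonoid (Fin 2) →* M := FreeMonoid.lift f

lemma ker : C ≤ Con.ker φ := by
  apply Con.conGen_le.mpr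
  rintro u v ⟨a, b, c, hab, hbc, hu, hv⟩
  have key : ∀ a b c : Fin 2, a ≤ b → b ≤ c →
      f c * f b * f a = f b * f c * f a ∧ f c * f b * f a = f c * f a * f b := by
    decide
  show φ u = φ v
  rcases hv with hv | hv <;> subst hu hv <;>
    simp only [map_mul, lift_eval_of] <;>
    [exact (key a b c hab hbc).1; exact (key a b c hab hbc).2]

def Φ : CH2 →* M := C.lift φ ker

lemma ΦX : Φ X = ⟨1, 0, 0⟩ := by
  show C.lift φ ker (C.mk' (of 0)) = _
  rw [Con.lift_mk']
  simp [φ, f]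

lemma ΦY : Φ Y = ⟨0, 0, 1⟩ := by
  show C.lift φ ker (C.mk' (of 1)) = _
  rw [Con.lift_mk']
  simp [φ, f]

lemma powA (n : ℕ) : (⟨1, 0, 0⟩ : M) ^ n = ⟨n, 0, 0⟩ := by
  induction n with
  | zero => rfl
  | succ n ih => rw [pow_succ, ih, M.mul_def]; simp [M.mk.injEq] <;> omega

lemma powB (n : ℕ) : (⟨0, 1, 0⟩ : M) ^ n = ⟨0, n, 0⟩ := by
  induction n with
  | zero => rfl
  | succ n ih => rw [pow_succ, ih, M.mul_def]; simp [M.mk.injEq] <;> omega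

lemma powC (n : ℕ) : (⟨0, 0, 1⟩ : M) ^ n = ⟨0, 0, n⟩ := by
  induction n with
  | zero => rfl
  | succ n ih => rw [pow_succ, ih, M.mul_def]; simp [M.mk.injEq] <;> omega

lemma Φe (a b c : ℕ) : Φ (e a b c) = ⟨a, b, c⟩ := by
  have hT : Φ (Y * X) = ⟨0, 1, 0⟩ := by rw [map_mul, ΦX, ΦY]; rfl
  simp only [e, map_mul, map_pow, ΦX, ΦY, hT, powA, powB, powC, M.mul_def]
  simp [M.mk.injEq] <;> omega

end CH2NF

/-- For the Chinese monoid on `{x_1 < x_2}`, the staircase words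
`x_1^a (x_2 x_1)^b x_2^c` represent pairwise distinct elements and every
element is represented by exactly one such word: the evaluation map is a
bijection. -/
theorem chinese_two_generators_normal_form :
    Function.Bijective (fun p : ℕ × ℕ × ℕ =>
      ((conGen (chineseRel (Fin 2))).mk' (of (0 : Fin 2))) ^ p.1 *
      ((conGen (chineseRel (Fin 2))).mk' (of (1 : Fin 2)) *
        (conGen (chineseRel (Fin 2))).mk' (of (0 : Fin 2))) ^ p.2.1 *
      ((conGen (chineseRel (Fin 2))).mk' (of (1 : Fin 2))) ^ p.2.2) := by
  have heq : ∀ p : ℕ × ℕ × ℕ,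
      ((conGen (chineseRel (Fin 2))).mk' (of (0 : Fin 2))) ^ p.1 *
      ((conGen (chineseRel (Fin 2))).mk' (of (1 : Fin 2)) *
        (conGen (chineseRel (Fin 2))).mk' (of (0 : Fin 2))) ^ p.2.1 *
      ((conGen (chineseRel (Fin 2))).mk' (of (1 : Fin 2))) ^ p.2.2
        = CH2NF.e p.1 p.2.1 p.2.2 := fun p => rfl
  constructor
  · rintro ⟨pa, pb, pc⟩ ⟨qa, qb, qc⟩ h
    have h' : CH2NF.e pa pb pc = CH2NF.e qa qb qc := h
    have h2 := congrArg CH2NF.Φ h'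
    rw [CH2NF.Φe, CH2NF.Φe] at h2
    injection h2 with h1 h2 h3
    simp_all
  · intro z
    obtain ⟨a, b, c, h⟩ := CH2NF.surj z
    exact ⟨(a, b, c), h⟩
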